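/- Let X ⊆ R^n be a convex set and f : X → R a radially lower semicontinuous function. Then f is pseudoconvex with respect to the lower Dini derivative if and only if f is semistrictly quasiconvex and, for any x, y ∈ X with f(y) < f(x), the point t = 0 is not a stationary point of the restriction φ(t) = f(x + t(y-x)) on X(x,y). -/

import Mathlib

open Filter Set

/-- Lower Dini directional derivative of a function of one real variable. -/
noncomputable def dini (φ : ℝ → ℝ) (s u : ℝ) : ℝ :=
  liminf (fun h : ℝ => (φ (s + h * u) - φ s) / h) (nhdsWithin 0 (Ioi 0))

/-- Pseudoconvexity w.r.t. the lower Dini derivative, one variable. -/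
def PseudoconvexOn (φ : ℝ → ℝ) (I : Set ℝ) : Prop :=
  ∀ s ∈ I, ∀ t ∈ I, φ t < φ s → dini φ s (t - s) < 0

/-- A direction `u` is admissible at `s` relative to `I`. -/
def Admissible (I : Set ℝ) (s u : ℝ) : Prop :=
  ∃ δ > 0, ∀ h ∈ Ioo (0:ℝ) δ, s + h * u ∈ I

/-- `s` is a stationary point of `φ` relative to `I`. -/
def Stationary (φ : ℝ → ℝ) (I : Set ℝ) (s : ℝ) : Prop :=
  ∀ u : ℝ, Admissible I s u → 0 ≤ dini φ s u

/-- Lower Dini directional derivative of `f : ℝⁿ → ℝ` at `x` in direction `u`. -/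
noncomputable def diniV {n : ℕ} (f : (Fin n → ℝ) → ℝ) (x u : Fin n → ℝ) : ℝ :=
  liminf (fun h : ℝ => (f (x + h • u) - f x) / h) (nhdsWithin 0 (Ioi 0))

/-- Pseudoconvexity of `f` on `X ⊆ ℝⁿ` w.r.t. the lower Dini derivative. -/
def PseudoconvexOnV {n : ℕ} (f : (Fin n → ℝ) → ℝ) (X : Set (Fin n → ℝ)) : Prop :=
  ∀ x ∈ X, ∀ y ∈ X, f y < f x → diniV f x (y - x) < 0

/-- A direction `u` is admissible at `x` relative to `X`. -/
def AdmissibleV {n : ℕ} (X : Set (Fin n → ℝ)) (x u : Fin n → ℝ) : Prop :=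
  ∃ δ > 0, ∀ h ∈ Ioo (0:ℝ) δ, x + h • u ∈ X

/-- `x` is a stationary point of `f` relative to `X`. -/
def StationaryV {n : ℕ} (f : (Fin n → ℝ) → ℝ) (X : Set (Fin n → ℝ)) (x : Fin n → ℝ) : Prop :=
  ∀ u : Fin n → ℝ, AdmissibleV X x u → 0 ≤ diniV f x u

/-- `f` is radially lower semicontinuous on `X`: lsc on every segment. -/
def RadiallyLSC {n : ℕ} (f : (Fin n → ℝ) → ℝ) (X : Set (Fin n → ℝ)) : Prop :=
  ∀ x ∈ X, ∀ y ∈ X,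
    LowerSemicontinuousOn (fun t : ℝ => f (x + t • (y - x))) (Icc 0 1)

/-- `f` is radially upper semicontinuous on `X`: usc on every segment. -/
def RadiallyUSC {n : ℕ} (f : (Fin n → ℝ) → ℝ) (X : Set (Fin n → ℝ)) : Prop :=
  ∀ x ∈ X, ∀ y ∈ X,
    UpperSemicontinuousOn (fun t : ℝ => f (x + t • (y - x))) (Icc 0 1)

/-- `f` is quasiconvex on `X`. -/
def QuasiconvexOnSeg {n : ℕ} (f : (Fin n → ℝ) → ℝ) (X : Set (Fin n → ℝ)) : Prop :=
  ∀ x ∈ X, ∀ y ∈ X, ∀ t ∈ Icc (0:ℝ) 1, f (x + t • (y - x)) ≤ max (f x) (f y)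

/-- `f` is semistrictly quasiconvex on `X`. -/
def SemistrictlyQuasiconvexOn {n : ℕ} (f : (Fin n → ℝ) → ℝ) (X : Set (Fin n → ℝ)) : Prop :=
  ∀ x ∈ X, ∀ y ∈ X, f y < f x → ∀ t ∈ Ioo (0:ℝ) 1, f (x + t • (y - x)) < f x

lemma freq_neg {r : ℝ → ℝ} {l : Filter ℝ} [l.NeBot] (h : liminf r l < 0) :
    ∃ᶠ x in l, r x < 0 := by
  by_contra hc
  have hev : ∀ᶠ x in l, (0:ℝ) ≤ r x := by
    simpa [not_frequently, not_lt] using hc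
  rw [liminf_eq] at h
  set A := {a : ℝ | ∀ᶠ x in l, a ≤ r x} with hA
  have h0 : (0:ℝ) ∈ A := hev
  by_cases hb : BddAbove A
  · exact absurd (le_csSup hb h0) (not_le.mpr h)
  · rw [csSup_of_not_bddAbove hb, Real.sSup_empty] at h; linarith

lemma tendsto_mul_right_pos {u : ℝ} (hu : 0 < u) :
    Tendsto (fun k : ℝ => k * u) (nhdsWithin 0 (Ioi 0)) (nhdsWithin 0 (Ioi 0)) := by
  rw [tendsto_nhdsWithin_iff]
  constructor
  · have := (continuous_mul_right u).tendsto (0:ℝ)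
    rw [zero_mul] at this
    exact this.mono_left nhdsWithin_le_nhds
  · filter_upwards [self_mem_nhdsWithin] with k hk
    exact mul_pos hk hu

lemma zmem {n : ℕ} {X : Set (Fin n → ℝ)} (hX : Convex ℝ X) {x y : Fin n → ℝ}
    (hx : x ∈ X) (hy : y ∈ X) {t : ℝ} (ht : t ∈ Icc (0:ℝ) 1) :
    x + t • (y - x) ∈ X := by
  have h := hX hx hy (sub_nonneg.mpr ht.2) ht.1 (by ring)
  convert h using 1
  module

lemma diniV_seg {n : ℕ} (f : (Fin n → ℝ) → ℝ) (x y : Fin n → ℝ) (s t : ℝ) :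
    diniV f (x + s • (y - x)) ((x + t • (y - x)) - (x + s • (y - x))) =
      liminf (fun h : ℝ => (f (x + (s + h * (t - s)) • (y - x)) - f (x + s • (y - x))) / h)
        (nhdsWithin 0 (Ioi 0)) := by
  unfold diniV
  congr 1
  funext h
  congr 3
  module

lemma dini_eq_diniV {n : ℕ} (f : (Fin n → ℝ) → ℝ) (x y : Fin n → ℝ) :
    dini (fun t : ℝ => f (x + t • (y - x))) 0 1 = diniV f x (y - x) := by
  unfold dini diniV
  congr 1
  funext h
  rw [show (0:ℝ) + h * 1 = h by ring]
  simp

lemma lsc_closed {φ : ℝ → ℝ} {A : Set ℝ} (hA : IsClosed A)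
    (h : LowerSemicontinuousOn φ A) (c : ℝ) :
    IsClosed {t | t ∈ A ∧ φ t ≤ c} := by
  set S := {t | t ∈ A ∧ φ t ≤ c} with hS
  have hSA : S ⊆ A := fun t ht => ht.1
  refine isClosed_of_closure_subset ?_
  intro z hz
  have hzA : z ∈ A := hA.closure_subset (closure_mono hSA hz)
  refine ⟨hzA, ?_⟩
  by_contra hgt
  push_neg at hgt
  have hev := h z hzA c hgt
  have hne : (nhdsWithin z S).NeBot := mem_closure_iff_nhdsWithin_neBot.mp hz
  have hev' : ∀ᶠ t in nhdsWithin z S, c < φ t :=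
    hev.filter_mono (nhdsWithin_mono _ hSA)
  obtain ⟨t, hct, htS⟩ := (hev'.and self_mem_nhdsWithin).exists
  exact absurd htS.2 (not_le.mpr hct)

lemma lsc_min {φ : ℝ → ℝ} {p q : ℝ} (hpq : p ≤ q)
    (h : LowerSemicontinuousOn φ (Icc p q)) :
    ∃ μ ∈ Icc p q, ∀ s ∈ Icc p q, φ μ ≤ φ s := by
  haveI : Nonempty (Icc p q) := ⟨⟨p, le_refl p, hpq⟩⟩
  set Z : Icc p q → Set ℝ := fun t => {s | s ∈ Icc p q ∧ φ s ≤ φ t} with hZ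
  have hcl : ∀ t, IsClosed (Z t) := fun t => lsc_closed isClosed_Icc h _
  have hcp : ∀ t, IsCompact (Z t) := fun t =>
    (isCompact_Icc).of_isClosed_subset (hcl t) (fun s hs => hs.1)
  have hne : ∀ t, (Z t).Nonempty := fun t => ⟨t.1, t.2, le_refl _⟩
  have hdir : Directed (· ⊇ ·) Z := by
    intro t₁ t₂
    rcases le_total (φ t₁) (φ t₂) with hle | hle
    · exact ⟨t₁, fun s hs => hs, fun s hs => ⟨hs.1, hs.2.trans hle⟩⟩
    · exact ⟨t₂, fun s hs => ⟨hs.1, hs.2.trans hle⟩, fun s hs => hs⟩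
  obtain ⟨μ, hμ⟩ :=
    IsCompact.nonempty_iInter_of_directed_nonempty_isCompact_isClosed Z hdir hne hcp hcl
  rw [mem_iInter] at hμ
  refine ⟨μ, (hμ ⟨p, le_refl p, hpq⟩).1, fun s hs => (hμ ⟨s, hs⟩).2⟩

lemma dini_scale {φ : ℝ → ℝ} {u : ℝ} (hu : 0 < u) (h : dini φ 0 u < 0) :
    dini φ 0 1 < 0 := by
  unfold dini at h ⊢
  rw [liminf_eq] at h ⊢
  set A := {a : ℝ | ∀ᶠ x in nhdsWithin 0 (Ioi 0), a ≤ (φ (0 + x * u) - φ 0) / x} with hAdef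
  set B := {a : ℝ | ∀ᶠ x in nhdsWithin 0 (Ioi 0), a ≤ (φ (0 + x * 1) - φ 0) / x} with hBdef
  have hbA : BddAbove A := by
    by_contra hb
    rw [csSup_of_not_bddAbove hb, Real.sSup_empty] at h; linarith
  have hneA : A.Nonempty := by
    by_contra hne
    rw [not_nonempty_iff_eq_empty] at hne
    rw [hne, Real.sSup_empty] at h; linarith
  have key1 : ∀ a ∈ B, u * a ∈ A := by
    intro a ha
    have h2 := (tendsto_mul_right_pos hu).eventually ha
    rw [hAdef]
    filter_upwards [h2, self_mem_nhdsWithin] with k hk hk0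
    have hkpos : (0:ℝ) < k := hk0
    rw [mul_one] at hk
    have hkne : k ≠ 0 := ne_of_gt hkpos
    have hune : u ≠ 0 := ne_of_gt hu
    have : u * ((φ (0 + k * u) - φ 0) / (k * u)) = (φ (0 + k * u) - φ 0) / k := by
      field_simp
    calc u * a ≤ u * ((φ (0 + k * u) - φ 0) / (k * u)) := by
                  exact mul_le_mul_of_nonneg_left hk (le_of_lt hu)
      _ = (φ (0 + k * u) - φ 0) / k := this
  have key2 : ∀ a ∈ A, a / u ∈ B := by
    intro a ha
    have hui : (0:ℝ) < u⁻¹ := inv_pos.mpr hu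
    have h2 := (tendsto_mul_right_pos hui).eventually ha
    rw [hBdef]
    filter_upwards [h2, self_mem_nhdsWithin] with k hk hk0
    have hkpos : (0:ℝ) < k := hk0
    have hkne : k ≠ 0 := ne_of_gt hkpos
    have hune : u ≠ 0 := ne_of_gt hu
    rw [show k * u⁻¹ * u = k by field_simp] at hk
    rw [mul_one]
    have : (φ (0 + k) - φ 0) / (k * u⁻¹) = u * ((φ (0 + k) - φ 0) / k) := by
      field_simp
    rw [this] at hk
    rw [div_le_iff₀ hu]
    calc a ≤ u * ((φ (0 + k) - φ 0) / k) := hk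
      _ = (φ (0 + k) - φ 0) / k * u := mul_comm _ _
  have hneB : B.Nonempty := by
    obtain ⟨a, ha⟩ := hneA
    exact ⟨a / u, key2 a ha⟩
  have hbB : ∀ a ∈ B, a ≤ sSup A / u := by
    intro a ha
    rw [le_div_iff₀ hu]
    calc a * u = u * a := mul_comm a u
      _ ≤ sSup A := le_csSup hbA (key1 a ha)
  calc sSup B ≤ sSup A / u := csSup_le hneB hbB
    _ < 0 := div_neg_of_neg_of_pos h hu

lemma seg_point_eq {n : ℕ} (x y : Fin n → ℝ) (s t τ : ℝ) :
    (x + s • (y - x)) + τ • ((x + t • (y - x)) - (x + s • (y - x))) =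
      x + (s + τ * (t - s)) • (y - x) := by
  module

lemma descent {n : ℕ} {f : (Fin n → ℝ) → ℝ} {X : Set (Fin n → ℝ)}
    (hpc : PseudoconvexOnV f X) {x y : Fin n → ℝ} {s t : ℝ}
    (hs : x + s • (y - x) ∈ X) (ht : x + t • (y - x) ∈ X)
    (hlt : f (x + t • (y - x)) < f (x + s • (y - x))) {η : ℝ} (hη : 0 < η) :
    ∃ h ∈ Ioo (0:ℝ) η, f (x + (s + h * (t - s)) • (y - x)) < f (x + s • (y - x)) := by
  have h1 := hpc _ hs _ ht hlt
  rw [diniV_seg f x y s t] at h1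
  have h2 := freq_neg h1
  have h3 : Ioo (0:ℝ) η ∈ nhdsWithin (0:ℝ) (Ioi 0) :=
    Ioo_mem_nhdsGT_of_mem ⟨le_refl 0, hη⟩
  obtain ⟨h, hneg, hmem⟩ :=
    (h2.and_eventually (eventually_of_mem h3 (fun _ hh => hh))).exists
  refine ⟨h, hmem, ?_⟩
  have hpos : 0 < h := hmem.1
  by_contra hge
  push_neg at hge
  have : 0 ≤ (f (x + (s + h * (t - s)) • (y - x)) - f (x + s • (y - x))) / h :=
    div_nonneg (by linarith) hpos.le
  linarith

lemma exists_ab {φ : ℝ → ℝ} {t c : ℝ} (hlφ : LowerSemicontinuousOn φ (Icc 0 1))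
    (ht0 : 0 ≤ t) (ht1 : t ≤ 1) (h0 : φ 0 ≤ c) (h1 : φ 1 ≤ c) (htc : c < φ t) :
    ∃ a b : ℝ, 0 ≤ a ∧ a < t ∧ t < b ∧ b ≤ 1 ∧ φ a ≤ c ∧ φ b ≤ c ∧
      ∀ s, a < s → s < b → c < φ s := by
  set K₁ := {s | s ∈ Icc 0 t ∧ φ s ≤ c} with hK₁
  have hcl₁ : IsClosed K₁ :=
    lsc_closed isClosed_Icc (hlφ.mono (Icc_subset_Icc le_rfl ht1)) c
  have hne₁ : K₁.Nonempty := ⟨0, ⟨le_rfl, ht0⟩, h0⟩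
  have hbd₁ : BddAbove K₁ := ⟨t, fun s hs => hs.1.2⟩
  have haK := hcl₁.csSup_mem hne₁ hbd₁
  set a := sSup K₁ with hadef
  have ha0 : 0 ≤ a := haK.1.1
  have hat : a < t := lt_of_le_of_ne haK.1.2 (by
    intro h; rw [h] at haK; exact absurd haK.2 (not_le.mpr htc))
  set K₂ := {s | s ∈ Icc t 1 ∧ φ s ≤ c} with hK₂
  have hcl₂ : IsClosed K₂ :=
    lsc_closed isClosed_Icc (hlφ.mono (Icc_subset_Icc ht0 le_rfl)) c
  have hne₂ : K₂.Nonempty := ⟨1, ⟨ht1, le_rfl⟩, h1⟩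
  have hbd₂ : BddBelow K₂ := ⟨t, fun s hs => hs.1.1⟩
  have hbK := hcl₂.csInf_mem hne₂ hbd₂
  set b := sInf K₂ with hbdef
  have htb : t < b := lt_of_le_of_ne hbK.1.1 (by
    intro h; rw [← h] at hbK; exact absurd hbK.2 (not_le.mpr htc))
  refine ⟨a, b, ha0, hat, htb, hbK.1.2, haK.2, hbK.2, ?_⟩
  intro s hs1 hs2
  rcases le_total s t with hle | hle
  · by_contra hc'
    push_neg at hc'
    have hsK : s ∈ K₁ := ⟨⟨ha0.trans hs1.le, hle⟩, hc'⟩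
    exact absurd (le_csSup hbd₁ hsK) (not_le.mpr hs1)
  · by_contra hc'
    push_neg at hc'
    have hsK : s ∈ K₂ := ⟨⟨hle, hs2.le.trans hbK.1.2⟩, hc'⟩
    exact absurd (csInf_le hbd₂ hsK) (not_le.mpr hs2)

lemma qc_of_pc {n : ℕ} {X : Set (Fin n → ℝ)} (hX : Convex ℝ X)
    {f : (Fin n → ℝ) → ℝ} (hlsc : RadiallyLSC f X)
    (hpc : PseudoconvexOnV f X) : QuasiconvexOnSeg f X := by
  intro x hx y hy t ht
  by_contra hgt
  push_neg at hgt
  set φ : ℝ → ℝ := fun s => f (x + s • (y - x)) with hφ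
  set c := max (f x) (f y) with hc
  have hφ0 : φ 0 = f x := by simp [hφ]
  have hφ1 : φ 1 = f y := by simp [hφ]
  have h0c : φ 0 ≤ c := by rw [hφ0]; exact le_max_left _ _
  have h1c : φ 1 ≤ c := by rw [hφ1]; exact le_max_right _ _
  have htc : c < φ t := hgt
  obtain ⟨a, b, ha0, hat, htb, hb1, haφ, hbφ, hgap⟩ :=
    exists_ab (hlsc x hx y hy) ht.1 ht.2 h0c h1c htc
  set q := (t + b) / 2 with hq
  have htq : t < q := by rw [hq]; linarith
  have hqb : q < b := by rw [hq]; linarith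
  have hq1 : q ≤ 1 := hqb.le.trans hb1
  obtain ⟨μ, hμmem, hμmin⟩ :=
    lsc_min htq.le ((hlsc x hx y hy).mono (Icc_subset_Icc ht.1 hq1))
  have hμb : μ < b := lt_of_le_of_lt hμmem.2 hqb
  have haμ : a < μ := hat.trans_le hμmem.1
  have hμc : c < φ μ := hgap μ haμ hμb
  have hμ01 : μ ∈ Icc (0:ℝ) 1 := ⟨ht.1.trans hμmem.1, hμmem.2.trans hq1⟩
  by_cases hμq : μ < q
  · -- descent toward b
    have hb01 : b ∈ Icc (0:ℝ) 1 := ⟨ht.1.trans htb.le, hb1⟩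
    have hltv : f (x + b • (y - x)) < f (x + μ • (y - x)) :=
      lt_of_le_of_lt hbφ hμc
    have hη : 0 < (q - μ) / (b - μ) := div_pos (by linarith) (by linarith)
    obtain ⟨h, hh, hdec⟩ :=
      descent hpc (zmem hX hx hy hμ01) (zmem hX hx hy hb01) hltv hη
    set s' := μ + h * (b - μ) with hs'
    have hs'1 : μ < s' := by
      rw [hs']; nlinarith [hh.1]
    have hs'2 : s' < q := by
      have h2 := hh.2
      rw [lt_div_iff₀ (by linarith : (0:ℝ) < b - μ)] at h2
      rw [hs']; linarith
    have hmin := hμmin s' ⟨hμmem.1.trans hs'1.le, hs'2.le⟩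
    exact absurd hmin (not_le.mpr hdec)
  · -- μ = q, descent toward a
    have hμq' : μ = q := le_antisymm hμmem.2 (not_lt.mp hμq)
    have htμ : t < μ := hμq' ▸ htq
    have ha01 : a ∈ Icc (0:ℝ) 1 := ⟨ha0, hat.le.trans ht.2⟩
    have hltv : f (x + a • (y - x)) < f (x + μ • (y - x)) :=
      lt_of_le_of_lt haφ hμc
    have hη : 0 < (μ - t) / (μ - a) := div_pos (by linarith) (by linarith)
    obtain ⟨h, hh, hdec⟩ :=
      descent hpc (zmem hX hx hy hμ01) (zmem hX hx hy ha01) hltv hη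
    set s' := μ + h * (a - μ) with hs'
    have hs'1 : s' < μ := by
      rw [hs']; nlinarith [hh.1]
    have hs'2 : t < s' := by
      have h2 := hh.2
      rw [lt_div_iff₀ (by linarith : (0:ℝ) < μ - a)] at h2
      rw [hs']; nlinarith
    have hmin := hμmin s' ⟨by linarith, by linarith⟩
    exact absurd hmin (not_le.mpr hdec)

lemma qc_of_ssqc {n : ℕ} {X : Set (Fin n → ℝ)} (hX : Convex ℝ X)
    {f : (Fin n → ℝ) → ℝ} (hlsc : RadiallyLSC f X)
    (hss : SemistrictlyQuasiconvexOn f X) : QuasiconvexOnSeg f X := by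
  intro x hx y hy t ht
  by_contra hgt
  push_neg at hgt
  set φ : ℝ → ℝ := fun s => f (x + s • (y - x)) with hφ
  set c := max (f x) (f y) with hc
  have hφ0 : φ 0 = f x := by simp [hφ]
  have hφ1 : φ 1 = f y := by simp [hφ]
  have h0c : φ 0 ≤ c := by rw [hφ0]; exact le_max_left _ _
  have h1c : φ 1 ≤ c := by rw [hφ1]; exact le_max_right _ _
  have htc : c < φ t := hgt
  obtain ⟨a, b, ha0, hat, htb, hb1, haφ, hbφ, hgap⟩ :=
    exists_ab (hlsc x hx y hy) ht.1 ht.2 h0c h1c htc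
  set t1 := (a + t) / 2 with ht1def
  have hat1 : a < t1 := by rw [ht1def]; linarith
  have ht1t : t1 < t := by rw [ht1def]; linarith
  have ht1c : c < φ t1 := hgap t1 hat1 (ht1t.trans htb)
  have ha01 : a ∈ Icc (0:ℝ) 1 := ⟨ha0, hat.le.trans ht.2⟩
  have hb01 : b ∈ Icc (0:ℝ) 1 := ⟨ht.1.trans htb.le, hb1⟩
  have ht01 : t ∈ Icc (0:ℝ) 1 := ht
  have ht101 : t1 ∈ Icc (0:ℝ) 1 := ⟨ha0.trans hat1.le, (ht1t.le.trans ht.2)⟩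
  -- step 1 : φ t1 < φ t via ssqc pair (z t, z a)
  have hstep1 : φ t1 < φ t := by
    have hlt : f (x + a • (y - x)) < f (x + t • (y - x)) := lt_of_le_of_lt haφ htc
    have hτ : (t - t1) / (t - a) ∈ Ioo (0:ℝ) 1 := by
      constructor
      · exact div_pos (by linarith) (by linarith)
      · rw [div_lt_one (by linarith)]; linarith
    have := hss (x + t • (y - x)) (zmem hX hx hy ht01)
      (x + a • (y - x)) (zmem hX hx hy ha01) hlt _ hτ
    rw [seg_point_eq] at this
    have hsc : t + (t - t1) / (t - a) * (a - t) = t1 := by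
      have hta : t - a ≠ 0 := by linarith
      field_simp
      ring
    rw [hsc] at this
    exact this
  -- step 2 : φ t < φ t1 via ssqc pair (z t1, z b)
  have hstep2 : φ t < φ t1 := by
    have hlt : f (x + b • (y - x)) < f (x + t1 • (y - x)) := lt_of_le_of_lt hbφ ht1c
    have hτ : (t - t1) / (b - t1) ∈ Ioo (0:ℝ) 1 := by
      constructor
      · exact div_pos (by linarith) (by linarith)
      · rw [div_lt_one (by linarith)]; linarith
    have := hss (x + t1 • (y - x)) (zmem hX hx hy ht101)
      (x + b • (y - x)) (zmem hX hx hy hb01) hlt _ hτ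
    rw [seg_point_eq] at this
    have hsc : t1 + (t - t1) / (b - t1) * (b - t1) = t := by
      have hbt1 : b - t1 ≠ 0 := by linarith
      rw [div_mul_cancel₀ _ hbt1]
      ring
    rw [hsc] at this
    exact this
  linarith

lemma ssqc_of_pc {n : ℕ} {X : Set (Fin n → ℝ)} (hX : Convex ℝ X)
    {f : (Fin n → ℝ) → ℝ} (hlsc : RadiallyLSC f X)
    (hpc : PseudoconvexOnV f X) : SemistrictlyQuasiconvexOn f X := by
  intro x hx y hy hxy t ht
  by_contra hge
  push_neg at hge
  set φ : ℝ → ℝ := fun s => f (x + s • (y - x)) with hφ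
  have hφ0 : φ 0 = f x := by simp [hφ]
  have hφ1 : φ 1 = f y := by simp [hφ]
  have hqc := qc_of_pc hX hlsc hpc
  have hle : φ t ≤ max (f x) (f y) := hqc x hx y hy t ⟨ht.1.le, ht.2.le⟩
  have heq : φ t = f x := le_antisymm (hle.trans_eq (max_eq_left hxy.le)) hge
  have h001 : (0:ℝ) ∈ Icc (0:ℝ) 1 := ⟨le_rfl, zero_le_one⟩
  have h101 : (1:ℝ) ∈ Icc (0:ℝ) 1 := ⟨zero_le_one, le_rfl⟩
  -- get p ∈ (0, t) with φ p < f x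
  have hlt01 : f (x + (1:ℝ) • (y - x)) < f (x + (0:ℝ) • (y - x)) := by
    rw [show x + (1:ℝ) • (y - x) = y by simp, show x + (0:ℝ) • (y - x) = x by simp]
    exact hxy
  obtain ⟨hp, hhp, hpdec⟩ :=
    descent hpc (zmem hX hx hy h001) (zmem hX hx hy h101) hlt01 ht.1
  set p := (0:ℝ) + hp * (1 - 0) with hpdef
  have hp0 : 0 < p := by rw [hpdef]; nlinarith [hhp.1]
  have hpt : p < t := by rw [hpdef]; nlinarith [hhp.2]
  have hpv : φ p < f x := by
    have := hpdec
    rw [show x + (0:ℝ) • (y - x) = x by simp] at this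
    exact this
  -- get q ∈ (t, 1) with φ q < f x
  have hlt1 : f (x + (1:ℝ) • (y - x)) < f (x + t • (y - x)) := by
    rw [show x + (1:ℝ) • (y - x) = y by simp]
    exact lt_of_lt_of_eq hxy heq.symm
  obtain ⟨hq, hhq, hqdec⟩ :=
    descent hpc (zmem hX hx hy ⟨ht.1.le, ht.2.le⟩) (zmem hX hx hy h101) hlt1 one_pos
  set q := t + hq * (1 - t) with hqdef
  have htq : t < q := by rw [hqdef]; nlinarith [hhq.1, ht.2]
  have hq1 : q < 1 := by rw [hqdef]; nlinarith [hhq.2, ht.2, hhq.1]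
  have hqv : φ q < f x := by
    have := hqdec
    rw [show f (x + t • (y - x)) = f x from heq] at this
    exact this
  -- quasiconvexity on pair (z p, z q)
  have hp01 : p ∈ Icc (0:ℝ) 1 := ⟨hp0.le, (hpt.le.trans ht.2.le)⟩
  have hq01 : q ∈ Icc (0:ℝ) 1 := ⟨(ht.1.trans htq).le, hq1.le⟩
  have hτ : (t - p) / (q - p) ∈ Icc (0:ℝ) 1 := by
    constructor
    · exact le_of_lt (div_pos (by linarith) (by linarith))
    · rw [div_le_one (by linarith)]; linarith
  have hfin := hqc (x + p • (y - x)) (zmem hX hx hy hp01)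
    (x + q • (y - x)) (zmem hX hx hy hq01) _ hτ
  rw [seg_point_eq] at hfin
  have hsc : p + (t - p) / (q - p) * (q - p) = t := by
    have hqp : q - p ≠ 0 := by linarith
    rw [div_mul_cancel₀ _ hqp]
    ring
  rw [hsc] at hfin
  have : φ t < f x := lt_of_le_of_lt hfin (max_lt hpv hqv)
  linarith [heq]

theorem stmt13 {n : ℕ} (X : Set (Fin n → ℝ)) (hX : Convex ℝ X)
    (f : (Fin n → ℝ) → ℝ) (hlsc : RadiallyLSC f X) :
    PseudoconvexOnV f X ↔
      (SemistrictlyQuasiconvexOn f X ∧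
        ∀ x ∈ X, ∀ y ∈ X, f y < f x →
          ¬ Stationary (fun t : ℝ => f (x + t • (y - x)))
            {t : ℝ | x + t • (y - x) ∈ X} 0) := by
  constructor
  · intro hpc
    refine ⟨ssqc_of_pc hX hlsc hpc, ?_⟩
    intro x hx y hy hxy hstat
    have hadm : Admissible {t : ℝ | x + t • (y - x) ∈ X} 0 1 := by
      refine ⟨1, one_pos, fun h hh => ?_⟩
      have : (0:ℝ) + h * 1 = h := by ring
      rw [mem_setOf_eq, this]
      exact zmem hX hx hy ⟨hh.1.le, hh.2.le⟩
    have h0 := hstat 1 hadm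
    rw [dini_eq_diniV] at h0
    exact absurd (hpc x hx y hy hxy) (not_lt.mpr h0)
  · rintro ⟨hss, hns⟩ x hx y hy hxy
    have hqc := qc_of_ssqc hX hlsc hss
    have h1 := hns x hx y hy hxy
    rw [Stationary] at h1
    push_neg at h1
    obtain ⟨u, hadm, hdu⟩ := h1
    rw [← dini_eq_diniV f x y]
    rcases lt_trichotomy u 0 with hu | hu | hu
    · exfalso
      obtain ⟨δ, hδ, hmem⟩ := hadm
      rw [dini] at hdu
      have hf := freq_neg hdu
      have h3 : Ioo (0:ℝ) δ ∈ nhdsWithin (0:ℝ) (Ioi 0) :=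
        Ioo_mem_nhdsGT_of_mem ⟨le_refl 0, hδ⟩
      obtain ⟨h, hneg, hh⟩ :=
        (hf.and_eventually (eventually_of_mem h3 fun _ z => z)).exists
      set s : ℝ := 0 + h * u with hsdef
      have hw : x + s • (y - x) ∈ X := hmem h hh
      have hs0 : s < 0 := by rw [hsdef]; nlinarith [hh.1]
      have hwlt : f (x + s • (y - x)) < f x := by
        by_contra hge
        push_neg at hge
        have hnum : (0:ℝ) ≤ f (x + s • (y - x)) - f (x + (0:ℝ) • (y - x)) := by
          rw [show x + (0:ℝ) • (y - x) = x by simp]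
          linarith
        have h0' := div_nonneg hnum hh.1.le
        exact absurd hneg (not_lt.mpr h0')
      have hτ : (-s) / (1 - s) ∈ Icc (0:ℝ) 1 := by
        constructor
        · exact div_nonneg (by linarith) (by linarith)
        · rw [div_le_one (by linarith)]; linarith
      have hfin := hqc (x + s • (y - x)) hw y hy ((-s) / (1 - s)) hτ
      have hpt : (x + s • (y - x)) + ((-s) / (1 - s)) • (y - (x + s • (y - x))) = x := by
        have h1s : (1:ℝ) - s ≠ 0 := by linarith
        have hτval : (-s) / (1 - s) * (1 - s) = -s := div_mul_cancel₀ _ h1s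
        have hmod : (x + s • (y - x)) + ((-s) / (1 - s)) • (y - (x + s • (y - x))) =
            x + (s + (-s) / (1 - s) * (1 - s)) • (y - x) := by module
        rw [hmod, hτval]
        simp
      rw [hpt] at hfin
      exact absurd hfin (not_le.mpr (lt_of_lt_of_le (max_lt hwlt hxy) le_rfl))
    · exfalso
      subst hu
      have hz : dini (fun t : ℝ => f (x + t • (y - x))) 0 0 = 0 := by
        rw [dini]
        have : (fun h : ℝ => ((fun t : ℝ => f (x + t • (y - x))) (0 + h * 0) -
            (fun t : ℝ => f (x + t • (y - x))) 0) / h) = fun _ : ℝ => (0:ℝ) := by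
          funext h
          simp
        rw [this, liminf_const]
      rw [hz] at hdu
      exact lt_irrefl _ hdu
    · exact dini_scale hu hdu
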